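/- Let (x0, y0) ∈ ℝ², δ > 0, and let p : ℝ² → ℝ be twice continuously differentiable on a neighborhood of [x0, x0+δ] × [y0, y0+δ]; let f : ℝ² → ℝ be twice continuously differentiable on a neighborhood of the set {(x, p(x,y)) : x ∈ [x0, x0+δ], y ∈ [y0, y0+δ]}. For h ∈ (0, δ] define the u-averaged (curve-approximated) mass M'(h) = (1/h) · ∫_{x0}^{x0+h} ∫_{x0}^{x0+h} ( ∫_{p(u, y0)}^{p(u, y0+h)} f(x,y) dy ) du dx and the true mass M(h) = ∫_{x0}^{x0+h} ( ∫_{p(x, y0)}^{p(x, y0+h)} f(x,y) dy ) dx. Then |M'(h) − M(h)| = O(h⁴) as h → 0⁺. In particular, this curve-based geometric approximation attains the same error order O(h⁴) as the straight-line (midpoint-averaged) approximation of the intermediate cell, so a more accurate geometric approximation does not reduce the geometric error order of the cascade remapping. -/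

import Mathlib

open Set Filter Topology Asymptotics MeasureTheory intervalIntegral


lemma prod_norm_sub (a b c d : ℝ) : ‖((a, b) : ℝ × ℝ) - (c, d)‖ = max |a - c| |b - d| := by
  simp [Prod.norm_def, Real.norm_eq_abs]

lemma abs_sub_le_max_of_mem_uIcc {y a b c : ℝ} (hy : y ∈ Set.uIcc a b) :
    |y - c| ≤ max |a - c| |b - c| := by
  rcases Set.mem_uIcc.mp hy with ⟨h1, h2⟩ | ⟨h1, h2⟩ <;> rw [abs_sub_le_iff] <;> constructor
  · exact le_trans (by linarith [le_abs_self (b - c)]) (le_max_right _ _)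
  · exact le_trans (by linarith [neg_abs_le (a - c)]) (le_max_left _ _)
  · exact le_trans (by linarith [le_abs_self (a - c)]) (le_max_left _ _)
  · exact le_trans (by linarith [neg_abs_le (b - c)]) (le_max_right _ _)

lemma second_diff_bound {F : ℝ × ℝ → ℝ} {s : Set (ℝ × ℝ)} (hs : Convex ℝ s)
    (hd : ∀ z ∈ s, HasFDerivAt F (fderiv ℝ F z) z)
    {C : ℝ}
    (hL : ∀ z ∈ s, ∀ w ∈ s, ‖fderiv ℝ F z - fderiv ℝ F w‖ ≤ C * ‖z - w‖)
    {x u y c : ℝ} (hxy : (x, y) ∈ s) (huy : (u, y) ∈ s) (hxc : (x, c) ∈ s)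
    (huc : (u, c) ∈ s) :
    |F (u, y) - F (x, y) - F (u, c) + F (x, c)| ≤ C * |y - c| * |u - x| := by
  have hmem : ∀ t ∈ Set.uIcc x u, ∀ b : ℝ, (x, b) ∈ s → (u, b) ∈ s → (t, b) ∈ s := by
    intro t ht b h1 h2
    rw [← segment_eq_uIcc] at ht
    obtain ⟨a1, a2, ha1, ha2, hab, hteq⟩ := ht
    have : a1 • ((x : ℝ), b) + a2 • ((u : ℝ), b) = (t, b) := by
      simp only [Prod.smul_mk, Prod.mk_add_mk, smul_eq_mul, Prod.mk.injEq]
      refine ⟨by simpa [smul_eq_mul] using hteq, by rw [← add_mul, hab, one_mul]⟩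
    rw [← this]
    exact hs h1 h2 ha1 ha2 hab
  set w : ℝ → ℝ := fun t => F (t, y) - F (t, c) with hw
  set D : ℝ → ℝ := fun t => fderiv ℝ F (t, y) (1, 0) - fderiv ℝ F (t, c) (1, 0) with hD
  have hderiv : ∀ t ∈ Set.uIcc x u, HasDerivWithinAt w (D t) (Set.uIcc x u) t := by
    intro t ht
    have h1 : HasDerivAt (fun t : ℝ => F (t, y)) (fderiv ℝ F (t, y) (1, 0)) t :=
      (hd _ (hmem t ht y hxy huy)).comp_hasDerivAt t
        ((hasDerivAt_id t).prodMk (hasDerivAt_const t y))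
    have h2 : HasDerivAt (fun t : ℝ => F (t, c)) (fderiv ℝ F (t, c) (1, 0)) t :=
      (hd _ (hmem t ht c hxc huc)).comp_hasDerivAt t
        ((hasDerivAt_id t).prodMk (hasDerivAt_const t c))
    exact (h1.sub h2).hasDerivWithinAt
  have hbound : ∀ t ∈ Set.uIcc x u, ‖D t‖ ≤ C * |y - c| := by
    intro t ht
    have e : D t = (fderiv ℝ F (t, y) - fderiv ℝ F (t, c)) (1, 0) := by
      simp [hD]
    rw [e]
    calc ‖(fderiv ℝ F (t, y) - fderiv ℝ F (t, c)) (1, 0)‖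
        ≤ ‖fderiv ℝ F (t, y) - fderiv ℝ F (t, c)‖ * ‖((1 : ℝ), (0 : ℝ))‖ :=
          ContinuousLinearMap.le_opNorm _ _
      _ ≤ (C * ‖((t : ℝ), y) - (t, c)‖) * 1 := by
          apply mul_le_mul (hL _ (hmem t ht y hxy huy) _ (hmem t ht c hxc huc))
          · simp [Prod.norm_def]
          · positivity
          · nlinarith [norm_nonneg (((t : ℝ), y) - (t, c)), hL _ (hmem t ht y hxy huy) _ (hmem t ht c hxc huc), norm_nonneg (fderiv ℝ F (t, y) - fderiv ℝ F (t, c))]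
      _ = C * |y - c| := by rw [prod_norm_sub]; simp
  have := Convex.norm_image_sub_le_of_norm_hasDerivWithin_le hderiv hbound
    (convex_uIcc x u) (Set.left_mem_uIcc) (Set.right_mem_uIcc)
  rw [Real.norm_eq_abs, Real.norm_eq_abs] at this
  calc |F (u, y) - F (x, y) - F (u, c) + F (x, c)| = |w u - w x| := by rw [hw]; ring_nf
    _ ≤ C * |y - c| * |u - x| := this

lemma mem_uIcc_of_mem_uIoc {a b y : ℝ} (hy : y ∈ Set.uIoc a b) : y ∈ Set.uIcc a b :=
  Set.Ioc_subset_Icc_self hy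

set_option maxHeartbeats 16000000 in
/-- Error of the curve-based geometric approximation (the CCSL' variant):
under the same smoothness assumptions as for the intermediate cell, the
u-averaged (curve-approximated) mass
`M'(h) = (1/h) ∫_{x₀}^{x₀+h} ∫_{x₀}^{x₀+h} ∫_{p(u,y₀)}^{p(u,y₀+h)} f(x,y) dy du dx`
differs from the true mass
`M(h) = ∫_{x₀}^{x₀+h} ∫_{p(x,y₀)}^{p(x,y₀+h)} f(x,y) dy dx`
by `O(h⁴)` as `h → 0⁺`; i.e. the curve-based approximation attains the same
error order as the straight-line approximation. -/
theorem stmt_6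
    (x0 y0 δ : ℝ) (hδ : 0 < δ)
    (p : ℝ → ℝ → ℝ) (V : Set (ℝ × ℝ)) (hV : IsOpen V)
    (hVrect : Set.Icc x0 (x0 + δ) ×ˢ Set.Icc y0 (y0 + δ) ⊆ V)
    (hp : ContDiffOn ℝ 2 (fun z : ℝ × ℝ => p z.1 z.2) V)
    (f : ℝ → ℝ → ℝ) (W : Set (ℝ × ℝ)) (hW : IsOpen W)
    (hWcurve : ∀ x ∈ Set.Icc x0 (x0 + δ), ∀ y ∈ Set.Icc y0 (y0 + δ),
        (x, p x y) ∈ W)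
    (hf : ContDiffOn ℝ 2 (fun z : ℝ × ℝ => f z.1 z.2) W) :
    (fun h : ℝ =>
        |(1 / h) *
            (∫ x in x0..(x0 + h),
              ∫ u in x0..(x0 + h), ∫ y in (p u y0)..(p u (y0 + h)), f x y)
          - ∫ x in x0..(x0 + h), ∫ y in (p x y0)..(p x (y0 + h)), f x y|)
      =O[𝓝[>] (0 : ℝ)] (fun h : ℝ => h ^ 4) := by
  set P : ℝ × ℝ → ℝ := fun z => p z.1 z.2 with hPdef
  set Fn : ℝ × ℝ → ℝ := fun z => f z.1 z.2 with hFndef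
  set R : Set (ℝ × ℝ) := Icc x0 (x0 + δ) ×ˢ Icc y0 (y0 + δ) with hRdef
  have hRV : R ⊆ V := hVrect
  have hRc : IsCompact R := isCompact_Icc.prod isCompact_Icc
  have hRconv : Convex ℝ R := (convex_Icc _ _).prod (convex_Icc _ _)
  have hPcont : ContinuousOn P V := hp.continuousOn
  set C₀ : Set (ℝ × ℝ) := (fun z : ℝ × ℝ => (z.1, P z)) '' R with hC0def
  have hC0c : IsCompact C₀ :=
    hRc.image_of_continuousOn (continuousOn_fst.prodMk (hPcont.mono hRV))
  have hC0W : C₀ ⊆ W := by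
    rintro _ ⟨z, hz, rfl⟩
    exact hWcurve z.1 hz.1 z.2 hz.2
  obtain ⟨ε, hε, hεW⟩ := hC0c.exists_cthickening_subset_open hW hC0W
  set K : Set (ℝ × ℝ) := Metric.cthickening ε C₀ with hKdef
  have hKc : IsCompact K := hC0c.cthickening
  have hKW : K ⊆ W := hεW
  -- differentiability facts for p
  have hPd : ∀ z ∈ V, HasFDerivAt P (fderiv ℝ P z) z := fun z hz =>
    ((hp.contDiffAt (hV.mem_nhds hz)).differentiableAt (by norm_num)).hasFDerivAt
  have hpF : ContDiffOn ℝ 1 (fderiv ℝ P) V := hp.fderiv_of_isOpen hV (by norm_num)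
  have hP1cont : ContinuousOn (fderiv ℝ P) V :=
    hp.continuousOn_fderiv_of_isOpen hV (by norm_num)
  have hP2cont : ContinuousOn (fderiv ℝ (fderiv ℝ P)) V :=
    hpF.continuousOn_fderiv_of_isOpen hV le_rfl
  have hP'd : ∀ z ∈ V, DifferentiableAt ℝ (fderiv ℝ P) z := fun z hz =>
    (hpF.contDiffAt (hV.mem_nhds hz)).differentiableAt one_ne_zero
  -- differentiability facts for f
  have hFd : ∀ z ∈ W, HasFDerivAt Fn (fderiv ℝ Fn z) z := fun z hz =>
    ((hf.contDiffAt (hW.mem_nhds hz)).differentiableAt (by norm_num)).hasFDerivAt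
  have hfF : ContDiffOn ℝ 1 (fderiv ℝ Fn) W := hf.fderiv_of_isOpen hW (by norm_num)
  have hF1cont : ContinuousOn (fderiv ℝ Fn) W :=
    hf.continuousOn_fderiv_of_isOpen hW (by norm_num)
  have hF2cont : ContinuousOn (fderiv ℝ (fderiv ℝ Fn)) W :=
    hfF.continuousOn_fderiv_of_isOpen hW le_rfl
  have hF'd : ∀ z ∈ W, DifferentiableAt ℝ (fderiv ℝ Fn) z := fun z hz =>
    (hfF.contDiffAt (hW.mem_nhds hz)).differentiableAt one_ne_zero
  have hFcont : ContinuousOn Fn W := hf.continuousOn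
  -- bounds
  obtain ⟨P₁', hP₁'⟩ := hRc.exists_bound_of_continuousOn (hP1cont.mono hRV)
  set P₁ := max P₁' 0 with hP₁def
  have hP₁ : ∀ z ∈ R, ‖fderiv ℝ P z‖ ≤ P₁ := fun z hz => (hP₁' z hz).trans (le_max_left _ _)
  have hP₁0 : 0 ≤ P₁ := le_max_right _ _
  obtain ⟨P₂', hP₂'⟩ := hRc.exists_bound_of_continuousOn (f := fderiv ℝ (fderiv ℝ P)) (hP2cont.mono hRV)
  set P₂ := max P₂' 0 with hP₂def
  have hP₂ : ∀ z ∈ R, ‖fderiv ℝ (fderiv ℝ P) z‖ ≤ P₂ := fun z hz =>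
    (hP₂' z hz).trans (le_max_left _ _)
  have hP₂0 : 0 ≤ P₂ := le_max_right _ _
  obtain ⟨M₀', hM₀'⟩ := hKc.exists_bound_of_continuousOn (hFcont.mono hKW)
  set M₀ := max M₀' 0 with hM₀def
  have hM₀ : ∀ z ∈ K, |Fn z| ≤ M₀ := fun z hz =>
    (Real.norm_eq_abs (Fn z) ▸ hM₀' z hz).trans (le_max_left _ _)
  have hM₀0 : 0 ≤ M₀ := le_max_right _ _
  obtain ⟨M₁', hM₁'⟩ := hKc.exists_bound_of_continuousOn (hF1cont.mono hKW)
  set M₁ := max M₁' 0 with hM₁def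
  have hM₁ : ∀ z ∈ K, ‖fderiv ℝ Fn z‖ ≤ M₁ := fun z hz => (hM₁' z hz).trans (le_max_left _ _)
  have hM₁0 : 0 ≤ M₁ := le_max_right _ _
  obtain ⟨M₂', hM₂'⟩ := hKc.exists_bound_of_continuousOn (f := fderiv ℝ (fderiv ℝ Fn)) (hF2cont.mono hKW)
  set M₂ := max M₂' 0 with hM₂def
  have hM₂ : ∀ z ∈ K, ‖fderiv ℝ (fderiv ℝ Fn) z‖ ≤ M₂ := fun z hz =>
    (hM₂' z hz).trans (le_max_left _ _)
  have hM₂0 : 0 ≤ M₂ := le_max_right _ _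
  -- Lipschitz estimates for p on R
  have lipP : ∀ z ∈ R, ∀ w ∈ R, |P w - P z| ≤ P₁ * ‖w - z‖ := by
    intro z hz w hw
    rw [← Real.norm_eq_abs]
    exact hRconv.norm_image_sub_le_of_norm_fderiv_le
      (fun y hy => (hPd y (hRV hy)).differentiableAt) hP₁ hz hw
  have lipP' : ∀ z ∈ R, ∀ w ∈ R, ‖fderiv ℝ P z - fderiv ℝ P w‖ ≤ P₂ * ‖z - w‖ := by
    intro z hz w hw
    exact hRconv.norm_image_sub_le_of_norm_fderiv_le
      (fun y hy => hP'd y (hRV hy)) hP₂ hw hz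
  set Cφ := 2 * (M₂ * P₁ * P₁) + P₂ * M₁ with hCφdef
  have hCφ0 : 0 ≤ Cφ := by positivity
  set h₀ := min δ ε with hh₀def
  have hh₀ : 0 < h₀ := lt_min hδ hε
  have key : ∀ h ∈ Ioc (0:ℝ) h₀,
      |(1 / h) *
            (∫ x in x0..(x0 + h),
              ∫ u in x0..(x0 + h), ∫ y in (p u y0)..(p u (y0 + h)), f x y)
          - ∫ x in x0..(x0 + h), ∫ y in (p x y0)..(p x (y0 + h)), f x y|
        ≤ Cφ * h ^ 4 := by
    rintro h ⟨hh0, hhle⟩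
    have hhδ : h ≤ δ := hhle.trans (min_le_left _ _)
    have hhε : h ≤ ε := hhle.trans (min_le_right _ _)
    have hx0h : x0 ≤ x0 + h := by linarith
    set Ih : Set ℝ := Icc x0 (x0 + h) with hIhdef
    set Qh : Set (ℝ × ℝ) := Icc x0 (x0 + h) ×ˢ Icc y0 (y0 + h) with hQhdef
    have hQR : Qh ⊆ R :=
      Set.prod_mono (Icc_subset_Icc le_rfl (by linarith)) (Icc_subset_Icc le_rfl (by linarith))
    have hQc : IsCompact Qh := isCompact_Icc.prod isCompact_Icc
    have hQne : Qh.Nonempty := ⟨(x0, y0), ⟨⟨le_rfl, by linarith⟩, ⟨le_rfl, by linarith⟩⟩⟩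
    have hPQ : ContinuousOn P Qh := hPcont.mono (hQR.trans hRV)
    obtain ⟨zm, hzm, hzmin⟩ := hQc.exists_isMinOn hQne hPQ
    obtain ⟨zM, hzM, hzmax⟩ := hQc.exists_isMaxOn hQne hPQ
    set J : Set ℝ := Icc (P zm) (P zM) with hJdef
    set S : Set (ℝ × ℝ) := Icc x0 (x0 + h) ×ˢ J with hSdef
    have hSconv : Convex ℝ S := (convex_Icc _ _).prod (convex_Icc _ _)
    have hSK : S ⊆ K := by
      rintro ⟨s, y⟩ ⟨hs, hy⟩
      have hconn : IsPreconnected Qh := ((convex_Icc _ _).prod (convex_Icc _ _)).isPreconnected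
      obtain ⟨z, hzQ, hzy⟩ := hconn.intermediate_value hzm hzM hPQ hy
      have hzC : (z.1, P z) ∈ C₀ := ⟨z, hQR hzQ, rfl⟩
      apply Metric.mem_cthickening_of_dist_le (s, y) (z.1, P z) ε C₀ hzC
      rw [Prod.dist_eq]
      have h1 : dist s z.1 ≤ h := by
        rw [Real.dist_eq, abs_sub_le_iff]
        exact ⟨by linarith [hs.1, hs.2, hzQ.1.1, hzQ.1.2],
          by linarith [hs.1, hs.2, hzQ.1.1, hzQ.1.2]⟩
      have h2 : dist y (P z) = 0 := by rw [hzy]; simp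
      exact max_le (h1.trans hhε) (by rw [h2]; linarith)
    have hSW : S ⊆ W := hSK.trans hKW
    have hy0m : y0 ∈ Icc y0 (y0 + h) := ⟨le_rfl, by linarith⟩
    have hy1m : y0 + h ∈ Icc y0 (y0 + h) := ⟨by linarith, le_rfl⟩
    have hAJ : ∀ x ∈ Ih, p x y0 ∈ J := fun x hx =>
      ⟨isMinOn_iff.mp hzmin (x, y0) ⟨hx, hy0m⟩, isMaxOn_iff.mp hzmax (x, y0) ⟨hx, hy0m⟩⟩
    have hBJ : ∀ x ∈ Ih, p x (y0 + h) ∈ J := fun x hx =>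
      ⟨isMinOn_iff.mp hzmin (x, y0 + h) ⟨hx, hy1m⟩, isMaxOn_iff.mp hzmax (x, y0 + h) ⟨hx, hy1m⟩⟩
    have hmemR : ∀ x ∈ Ih, ∀ y' ∈ Icc y0 (y0 + h), ((x, y') : ℝ × ℝ) ∈ R :=
      fun x hx y' hy' => hQR ⟨hx, hy'⟩
    have habsIh : ∀ x ∈ Ih, ∀ u ∈ Ih, |u - x| ≤ h := by
      intro x hx u hu
      rw [abs_sub_le_iff]
      exact ⟨by linarith [hx.1, hx.2, hu.1, hu.2], by linarith [hx.1, hx.2, hu.1, hu.2]⟩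
    have habsIy : ∀ y' ∈ Icc y0 (y0 + h), ∀ y'' ∈ Icc y0 (y0 + h), |y'' - y'| ≤ h := by
      intro y' hy' y'' hy''
      rw [abs_sub_le_iff]
      exact ⟨by linarith [hy'.1, hy'.2, hy''.1, hy''.2], by linarith [hy'.1, hy'.2, hy''.1, hy''.2]⟩
    -- Lipschitz bound for p on the small square
    have lph : ∀ x ∈ Ih, ∀ u ∈ Ih, ∀ y' ∈ Icc y0 (y0 + h), ∀ y'' ∈ Icc y0 (y0 + h),
        |p u y'' - p x y'| ≤ P₁ * h := by
      intro x hx u hu y' hy' y'' hy''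
      have := lipP (x, y') (hmemR x hx y' hy') (u, y'') (hmemR u hu y'' hy'')
      rw [prod_norm_sub] at this
      exact this.trans (mul_le_mul_of_nonneg_left
        (max_le (habsIh x hx u hu) (habsIy y' hy' y'' hy'')) hP₁0)
    -- second difference bound for p
    have E2 : ∀ x ∈ Ih, ∀ u ∈ Ih,
        |p u (y0 + h) - p x (y0 + h) - (p u y0 - p x y0)| ≤ P₂ * h * h := by
      intro x hx u hu
      have := second_diff_bound hRconv (fun z hz => hPd z (hRV hz)) lipP'
        (hmemR x hx (y0 + h) hy1m) (hmemR u hu (y0 + h) hy1m)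
        (hmemR x hx y0 hy0m) (hmemR u hu y0 hy0m)
      simp only [hPdef] at this
      have e : |p u (y0 + h) - p x (y0 + h) - (p u y0 - p x y0)|
          = |p u (y0 + h) - p x (y0 + h) - p u y0 + p x y0| := by ring_nf
      rw [e]
      refine this.trans ?_
      have h1 : |y0 + h - y0| = h := by rw [abs_of_pos] <;> [skip; linarith]; ring_nf
      rw [h1]
      exact mul_le_mul_of_nonneg_left (habsIh x hx u hu) (by positivity)
    -- Lipschitz estimates for f on S
    have lipFn : ∀ z ∈ S, ∀ w ∈ S, |Fn w - Fn z| ≤ M₁ * ‖w - z‖ := by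
      intro z hz w hw
      rw [← Real.norm_eq_abs]
      exact hSconv.norm_image_sub_le_of_norm_fderiv_le
        (fun y hy => ((hFd y (hSW hy)).differentiableAt))
        (fun y hy => hM₁ y (hSK hy)) hz hw
    have lipFn' : ∀ z ∈ S, ∀ w ∈ S, ‖fderiv ℝ Fn z - fderiv ℝ Fn w‖ ≤ M₂ * ‖z - w‖ := by
      intro z hz w hw
      exact hSconv.norm_image_sub_le_of_norm_fderiv_le
        (fun y hy => hF'd y (hSW hy)) (fun y hy => hM₂ y (hSK hy)) hw hz
    have EG : ∀ x ∈ Ih, ∀ u ∈ Ih, ∀ y ∈ J, ∀ c ∈ J,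
        |f u y - f x y - f u c + f x c| ≤ M₂ * |y - c| * |u - x| := by
      intro x hx u hu y hy c hc
      have := second_diff_bound hSconv (fun z hz => hFd z (hSW hz)) lipFn'
        (show ((x, y) : ℝ × ℝ) ∈ S from ⟨hx, hy⟩) (show ((u, y) : ℝ × ℝ) ∈ S from ⟨hu, hy⟩)
        (show ((x, c) : ℝ × ℝ) ∈ S from ⟨hx, hc⟩) (show ((u, c) : ℝ × ℝ) ∈ S from ⟨hu, hc⟩)
      simpa only [hFndef] using this
    have lf : ∀ x ∈ Ih, ∀ u ∈ Ih, ∀ y ∈ J, |f u y - f x y| ≤ M₁ * |u - x| := by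
      intro x hx u hu y hy
      have := lipFn (x, y) ⟨hx, hy⟩ (u, y) ⟨hu, hy⟩
      rw [prod_norm_sub] at this
      simp only [hFndef] at this
      simpa [max_eq_left (abs_nonneg (u - x))] using this
    have boundf : ∀ x ∈ Ih, ∀ y ∈ J, |f x y| ≤ M₀ := by
      intro x hx y hy
      have := hM₀ (x, y) (hSK ⟨hx, hy⟩)
      simpa only [hFndef] using this
    -- integrability of slices
    have hfc : ∀ s ∈ Ih, ContinuousOn (fun y => f s y) J := by
      intro s hs
      have : ContinuousOn (Fn ∘ (fun y : ℝ => (s, y))) J :=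
        hFcont.comp (Continuous.prodMk_right s).continuousOn (fun y hy => hSW ⟨hs, hy⟩)
      simpa only [hFndef, Function.comp_def] using this
    have hintf : ∀ s ∈ Ih, ∀ a ∈ J, ∀ b ∈ J,
        IntervalIntegrable (fun y => f s y) volume a b := fun s hs a ha b hb =>
      ((hfc s hs).mono (uIcc_subset_Icc ha hb)).intervalIntegrable
    set g : ℝ → ℝ → ℝ := fun s t => ∫ y in (p t y0)..(p t (y0 + h)), f s y with hgdef
    clear_value g
    have hφ : ∀ x ∈ Ih, ∀ u ∈ Ih,
        |g x u + g u x - g x x - g u u| ≤ Cφ * h ^ 3 := by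
      intro x hx u hu
      have hintfx := hintf x hx
      have hintfu := hintf u hu
      have haxJ := hAJ x hx
      have hauJ := hAJ u hu
      have hbxJ := hBJ x hx
      have hbuJ := hBJ u hu
      have gxu : g x u = ∫ y in (p u y0)..(p u (y0 + h)), f x y := by simp only [hgdef]
      have gxx : g x x = ∫ y in (p x y0)..(p x (y0 + h)), f x y := by simp only [hgdef]
      have gux : g u x = ∫ y in (p x y0)..(p x (y0 + h)), f u y := by simp only [hgdef]
      have guu : g u u = ∫ y in (p u y0)..(p u (y0 + h)), f u y := by simp only [hgdef]
      have A1 : (∫ y in (p u y0)..(p x y0), f x y) + (∫ y in (p x y0)..(p u (y0+h)), f x y)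
          = ∫ y in (p u y0)..(p u (y0+h)), f x y :=
        integral_add_adjacent_intervals (hintfx _ hauJ _ haxJ) (hintfx _ haxJ _ hbuJ)
      have A2 : (∫ y in (p x y0)..(p x (y0+h)), f x y)
            + (∫ y in (p x (y0+h))..(p u (y0+h)), f x y)
          = ∫ y in (p x y0)..(p u (y0+h)), f x y :=
        integral_add_adjacent_intervals (hintfx _ haxJ _ hbxJ) (hintfx _ hbxJ _ hbuJ)
      have A3 : (∫ y in (p u y0)..(p x y0), f x y) = -∫ y in (p x y0)..(p u y0), f x y :=
        integral_symm _ _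
      have B1 : (∫ y in (p x y0)..(p u y0), f u y) + (∫ y in (p u y0)..(p u (y0+h)), f u y)
          = ∫ y in (p x y0)..(p u (y0+h)), f u y :=
        integral_add_adjacent_intervals (hintfu _ haxJ _ hauJ) (hintfu _ hauJ _ hbuJ)
      have B2 : (∫ y in (p x y0)..(p x (y0+h)), f u y)
            + (∫ y in (p x (y0+h))..(p u (y0+h)), f u y)
          = ∫ y in (p x y0)..(p u (y0+h)), f u y :=
        integral_add_adjacent_intervals (hintfu _ haxJ _ hbxJ) (hintfu _ hbxJ _ hbuJ)
      have S1 : (∫ y in (p x (y0+h))..(p u (y0+h)), f x y)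
            - (∫ y in (p x (y0+h))..(p u (y0+h)), f u y)
          = ∫ y in (p x (y0+h))..(p u (y0+h)), (f x y - f u y) :=
        (integral_sub (hintfx _ hbxJ _ hbuJ) (hintfu _ hbxJ _ hbuJ)).symm
      have S2 : (∫ y in (p x y0)..(p u y0), f x y) - (∫ y in (p x y0)..(p u y0), f u y)
          = ∫ y in (p x y0)..(p u y0), (f x y - f u y) :=
        (integral_sub (hintfx _ haxJ _ hauJ) (hintfu _ haxJ _ hauJ)).symm
      have φeq : g x u + g u x - g x x - g u u
          = (∫ y in (p x (y0+h))..(p u (y0+h)), (f x y - f u y))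
            - ∫ y in (p x y0)..(p u y0), (f x y - f u y) := by
        rw [gxu, gxx, gux, guu]
        linarith [A1, A2, A3, B1, B2, S1, S2]
      set G : ℝ → ℝ := fun y => f x y - f u y with hGdef
      have hGint : ∀ a ∈ J, ∀ b ∈ J, IntervalIntegrable G volume a b := fun a ha b hb =>
        (hintfx _ ha _ hb).sub (hintfu _ ha _ hb)
      have hc : p x y0 ∈ J := haxJ
      have hGb : ∀ y ∈ Set.uIcc (p x (y0+h)) (p u (y0+h)),
          |G y - G (p x y0)| ≤ M₂ * (P₁ * h) * h := by
        intro y hyB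
        have hyJ : y ∈ J := uIcc_subset_Icc hbxJ hbuJ hyB
        have h1 : |y - p x y0| ≤ P₁ * h := by
          refine (abs_sub_le_max_of_mem_uIcc hyB).trans (max_le ?_ ?_)
          · exact lph x hx x hx y0 hy0m (y0+h) hy1m
          · exact lph x hx u hu y0 hy0m (y0+h) hy1m
        have h2 : G y - G (p x y0) = -(f u y - f x y - f u (p x y0) + f x (p x y0)) := by
          simp only [hGdef]; ring
        rw [h2, abs_neg]
        calc |f u y - f x y - f u (p x y0) + f x (p x y0)|
            ≤ M₂ * |y - p x y0| * |u - x| := EG x hx u hu y hyJ _ hc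
          _ ≤ M₂ * (P₁ * h) * |u - x| :=
              mul_le_mul_of_nonneg_right (mul_le_mul_of_nonneg_left h1 hM₂0) (abs_nonneg _)
          _ ≤ M₂ * (P₁ * h) * h := mul_le_mul_of_nonneg_left (habsIh x hx u hu) (by positivity)
      have hGa : ∀ y ∈ Set.uIcc (p x y0) (p u y0),
          |G y - G (p x y0)| ≤ M₂ * (P₁ * h) * h := by
        intro y hyA
        have hyJ : y ∈ J := uIcc_subset_Icc haxJ hauJ hyA
        have h1 : |y - p x y0| ≤ P₁ * h := by
          refine (abs_sub_le_max_of_mem_uIcc hyA).trans (max_le ?_ ?_)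
          · simpa using mul_nonneg hP₁0 hh0.le
          · exact lph x hx u hu y0 hy0m y0 hy0m
        have h2 : G y - G (p x y0) = -(f u y - f x y - f u (p x y0) + f x (p x y0)) := by
          simp only [hGdef]; ring
        rw [h2, abs_neg]
        calc |f u y - f x y - f u (p x y0) + f x (p x y0)|
            ≤ M₂ * |y - p x y0| * |u - x| := EG x hx u hu y hyJ _ hc
          _ ≤ M₂ * (P₁ * h) * |u - x| :=
              mul_le_mul_of_nonneg_right (mul_le_mul_of_nonneg_left h1 hM₂0) (abs_nonneg _)
          _ ≤ M₂ * (P₁ * h) * h := mul_le_mul_of_nonneg_left (habsIh x hx u hu) (by positivity)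
      have ib1 : |∫ y in (p x (y0+h))..(p u (y0+h)), (G y - G (p x y0))|
          ≤ M₂ * (P₁ * h) * h * (P₁ * h) := by
        have hb := intervalIntegral.norm_integral_le_of_norm_le_const
          (C := M₂ * (P₁ * h) * h) (f := fun y => G y - G (p x y0))
          (a := p x (y0+h)) (b := p u (y0+h))
          (fun y hy => by rw [Real.norm_eq_abs]; exact hGb y (mem_uIcc_of_mem_uIoc hy))
        rw [Real.norm_eq_abs] at hb
        refine hb.trans ?_
        exact mul_le_mul_of_nonneg_left (lph x hx u hu (y0+h) hy1m (y0+h) hy1m) (by positivity)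
      have ib2 : |∫ y in (p x y0)..(p u y0), (G y - G (p x y0))|
          ≤ M₂ * (P₁ * h) * h * (P₁ * h) := by
        have hb := intervalIntegral.norm_integral_le_of_norm_le_const
          (C := M₂ * (P₁ * h) * h) (f := fun y => G y - G (p x y0))
          (a := p x y0) (b := p u y0)
          (fun y hy => by rw [Real.norm_eq_abs]; exact hGa y (mem_uIcc_of_mem_uIoc hy))
        rw [Real.norm_eq_abs] at hb
        refine hb.trans ?_
        exact mul_le_mul_of_nonneg_left (lph x hx u hu y0 hy0m y0 hy0m) (by positivity)
      have hGc : |G (p x y0)| ≤ M₁ * h := by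
        have hlf := lf x hx u hu (p x y0) hc
        have e : G (p x y0) = -(f u (p x y0) - f x (p x y0)) := by simp only [hGdef]; ring
        rw [e, abs_neg]
        exact hlf.trans (mul_le_mul_of_nonneg_left (habsIh x hx u hu) hM₁0)
      have d1 : (∫ y in (p x (y0+h))..(p u (y0+h)), G y)
          = (∫ y in (p x (y0+h))..(p u (y0+h)), (G y - G (p x y0)))
            + (p u (y0+h) - p x (y0+h)) * G (p x y0) := by
        rw [integral_sub (hGint _ hbxJ _ hbuJ) intervalIntegrable_const,
          intervalIntegral.integral_const, smul_eq_mul]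
        ring
      have d2 : (∫ y in (p x y0)..(p u y0), G y)
          = (∫ y in (p x y0)..(p u y0), (G y - G (p x y0)))
            + (p u y0 - p x y0) * G (p x y0) := by
        rw [integral_sub (hGint _ haxJ _ hauJ) intervalIntegrable_const,
          intervalIntegral.integral_const, smul_eq_mul]
        ring
      have hmain : |(p u (y0+h) - p x (y0+h) - (p u y0 - p x y0)) * G (p x y0)|
          ≤ P₂ * h * h * (M₁ * h) := by
        rw [abs_mul]
        exact mul_le_mul (E2 x hx u hu) hGc (abs_nonneg _) (by positivity)
      rw [φeq, d1, d2]
      have e : (∫ y in (p x (y0+h))..(p u (y0+h)), (G y - G (p x y0)))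
            + (p u (y0+h) - p x (y0+h)) * G (p x y0)
            - ((∫ y in (p x y0)..(p u y0), (G y - G (p x y0)))
              + (p u y0 - p x y0) * G (p x y0))
          = (∫ y in (p x (y0+h))..(p u (y0+h)), (G y - G (p x y0)))
            - (∫ y in (p x y0)..(p u y0), (G y - G (p x y0)))
            + (p u (y0+h) - p x (y0+h) - (p u y0 - p x y0)) * G (p x y0) := by ring
      rw [e]
      have tri1 := abs_add_le
        ((∫ y in (p x (y0+h))..(p u (y0+h)), (G y - G (p x y0)))
          - (∫ y in (p x y0)..(p u y0), (G y - G (p x y0))))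
        ((p u (y0+h) - p x (y0+h) - (p u y0 - p x y0)) * G (p x y0))
      have tri2 := abs_sub (∫ y in (p x (y0+h))..(p u (y0+h)), (G y - G (p x y0)))
        (∫ y in (p x y0)..(p u y0), (G y - G (p x y0)))
      have efin : M₂ * (P₁ * h) * h * (P₁ * h) + M₂ * (P₁ * h) * h * (P₁ * h)
          + P₂ * h * h * (M₁ * h) = Cφ * h ^ 3 := by rw [hCφdef]; ring
      linarith [ib1, ib2, hmain, tri1, tri2]
    have lpy : ∀ x ∈ Ih, ∀ u ∈ Ih, ∀ y' ∈ Icc y0 (y0 + h),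
        |p u y' - p x y'| ≤ P₁ * |u - x| := by
      intro x hx u hu y' hy'
      have hl := lipP (x, y') (hmemR x hx y' hy') (u, y') (hmemR u hu y' hy')
      rw [prod_norm_sub] at hl
      simpa [max_eq_left (abs_nonneg (u - x))] using hl
    set Cg := M₁ * (P₁ * h) + 2 * (M₀ * P₁) with hCgdef
    have hCg0 : 0 ≤ Cg := by positivity
    have hgg : ∀ z ∈ Ih ×ˢ Ih, ∀ w ∈ Ih ×ˢ Ih,
        |g z.1 z.2 - g w.1 w.2| ≤ Cg * dist z w := by
      rintro ⟨s, t⟩ ⟨hs, ht⟩ ⟨s', t'⟩ ⟨hs', ht'⟩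
      have hat := hAJ t ht
      have hbt := hBJ t ht
      have hat' := hAJ t' ht'
      have hbt' := hBJ t' ht'
      have parta : |g s t - g s' t| ≤ M₁ * (P₁ * h) * |s - s'| := by
        have gst : g s t = ∫ y in (p t y0)..(p t (y0+h)), f s y := by simp only [hgdef]
        have gs't : g s' t = ∫ y in (p t y0)..(p t (y0+h)), f s' y := by simp only [hgdef]
        have hsub : g s t - g s' t = ∫ y in (p t y0)..(p t (y0+h)), (f s y - f s' y) := by
          rw [gst, gs't]
          exact (integral_sub (hintf s hs _ hat _ hbt) (hintf s' hs' _ hat _ hbt)).symm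
        rw [hsub]
        have hbd := intervalIntegral.norm_integral_le_of_norm_le_const
          (C := M₁ * |s - s'|) (f := fun y => f s y - f s' y) (a := p t y0) (b := p t (y0+h))
          (fun y hy => by
            rw [Real.norm_eq_abs]
            exact lf s' hs' s hs y (uIcc_subset_Icc hat hbt (mem_uIcc_of_mem_uIoc hy)))
        rw [Real.norm_eq_abs] at hbd
        refine hbd.trans ?_
        calc M₁ * |s - s'| * |p t (y0+h) - p t y0|
            ≤ M₁ * |s - s'| * (P₁ * h) := mul_le_mul_of_nonneg_left
              (lph t ht t ht y0 hy0m (y0+h) hy1m) (by positivity)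
          _ = M₁ * (P₁ * h) * |s - s'| := by ring
      have partb : |g s' t - g s' t'| ≤ 2 * (M₀ * P₁) * |t - t'| := by
        have gs't : g s' t = ∫ y in (p t y0)..(p t (y0+h)), f s' y := by simp only [hgdef]
        have gs't' : g s' t' = ∫ y in (p t' y0)..(p t' (y0+h)), f s' y := by simp only [hgdef]
        have adj1 : (∫ y in (p t y0)..(p t' y0), f s' y)
              + (∫ y in (p t' y0)..(p t' (y0+h)), f s' y)
            = ∫ y in (p t y0)..(p t' (y0+h)), f s' y :=
          integral_add_adjacent_intervals (hintf s' hs' _ hat _ hat') (hintf s' hs' _ hat' _ hbt')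
        have adj2 : (∫ y in (p t y0)..(p t' (y0+h)), f s' y)
              + (∫ y in (p t' (y0+h))..(p t (y0+h)), f s' y)
            = ∫ y in (p t y0)..(p t (y0+h)), f s' y :=
          integral_add_adjacent_intervals (hintf s' hs' _ hat _ hbt') (hintf s' hs' _ hbt' _ hbt)
        have i1b : |∫ y in (p t y0)..(p t' y0), f s' y| ≤ M₀ * (P₁ * |t' - t|) := by
          have hbd := intervalIntegral.norm_integral_le_of_norm_le_const
            (C := M₀) (f := fun y => f s' y) (a := p t y0) (b := p t' y0)
            (fun y hy => by
              rw [Real.norm_eq_abs]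
              exact boundf s' hs' y (uIcc_subset_Icc hat hat' (mem_uIcc_of_mem_uIoc hy)))
          rw [Real.norm_eq_abs] at hbd
          exact hbd.trans (mul_le_mul_of_nonneg_left (lpy t ht t' ht' y0 hy0m) hM₀0)
        have i2b : |∫ y in (p t' (y0+h))..(p t (y0+h)), f s' y| ≤ M₀ * (P₁ * |t - t'|) := by
          have hbd := intervalIntegral.norm_integral_le_of_norm_le_const
            (C := M₀) (f := fun y => f s' y) (a := p t' (y0+h)) (b := p t (y0+h))
            (fun y hy => by
              rw [Real.norm_eq_abs]
              exact boundf s' hs' y (uIcc_subset_Icc hbt' hbt (mem_uIcc_of_mem_uIoc hy)))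
          rw [Real.norm_eq_abs] at hbd
          exact hbd.trans (mul_le_mul_of_nonneg_left (lpy t' ht' t ht (y0+h) hy1m) hM₀0)
        have hdiff : g s' t - g s' t'
            = (∫ y in (p t y0)..(p t' y0), f s' y)
              + ∫ y in (p t' (y0+h))..(p t (y0+h)), f s' y := by
          rw [gs't, gs't']
          linarith [adj1, adj2]
        rw [hdiff]
        have htt : |t' - t| = |t - t'| := abs_sub_comm t' t
        calc |(∫ y in (p t y0)..(p t' y0), f s' y)
              + ∫ y in (p t' (y0+h))..(p t (y0+h)), f s' y|
            ≤ |∫ y in (p t y0)..(p t' y0), f s' y|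
              + |∫ y in (p t' (y0+h))..(p t (y0+h)), f s' y| := abs_add_le _ _
          _ ≤ M₀ * (P₁ * |t' - t|) + M₀ * (P₁ * |t - t'|) := add_le_add i1b i2b
          _ = 2 * (M₀ * P₁) * |t - t'| := by rw [htt]; ring
      have h1 : |s - s'| ≤ dist ((s, t) : ℝ × ℝ) ((s', t') : ℝ × ℝ) := by
        rw [Prod.dist_eq]
        exact le_trans (by rw [Real.dist_eq]) (le_max_left _ _)
      have h2 : |t - t'| ≤ dist ((s, t) : ℝ × ℝ) ((s', t') : ℝ × ℝ) := by
        rw [Prod.dist_eq]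
        exact le_trans (by rw [Real.dist_eq]) (le_max_right _ _)
      calc |g s t - g s' t'| ≤ |g s t - g s' t| + |g s' t - g s' t'| := abs_sub_le _ _ _
        _ ≤ M₁ * (P₁ * h) * |s - s'| + 2 * (M₀ * P₁) * |t - t'| := add_le_add parta partb
        _ ≤ Cg * dist ((s, t) : ℝ × ℝ) ((s', t') : ℝ × ℝ) := by
            rw [hCgdef]
            have e1 := mul_le_mul_of_nonneg_left h1 (by positivity : (0:ℝ) ≤ M₁ * (P₁ * h))
            have e2 := mul_le_mul_of_nonneg_left h2 (by positivity : (0:ℝ) ≤ 2 * (M₀ * P₁))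
            nlinarith [e1, e2]
    have gcont : ContinuousOn (fun z : ℝ × ℝ => g z.1 z.2) (Ih ×ˢ Ih) := by
      have : LipschitzOnWith (Real.toNNReal Cg) (fun z : ℝ × ℝ => g z.1 z.2) (Ih ×ˢ Ih) := by
        apply LipschitzOnWith.of_dist_le_mul
        intro z hz w hw
        rw [Real.dist_eq, Real.coe_toNNReal _ hCg0]
        exact hgg z hz w hw
      exact this.continuousOn
    have i1 : ∀ x ∈ Ih, IntervalIntegrable (fun u => g x u) volume x0 (x0+h) := by
      intro x hx
      apply ContinuousOn.intervalIntegrable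
      rw [uIcc_of_le hx0h]
      exact gcont.comp (Continuous.continuousOn (Continuous.prodMk_right x)) (fun u hu => ⟨hx, hu⟩)
    have i2 : ∀ x ∈ Ih, IntervalIntegrable (fun u => g u x) volume x0 (x0+h) := by
      intro x hx
      apply ContinuousOn.intervalIntegrable
      rw [uIcc_of_le hx0h]
      exact gcont.comp (Continuous.continuousOn (continuous_id.prodMk continuous_const))
        (fun u hu => ⟨hu, hx⟩)
    have i3 : IntervalIntegrable (fun u => g u u) volume x0 (x0+h) := by
      apply ContinuousOn.intervalIntegrable
      rw [uIcc_of_le hx0h]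
      exact gcont.comp (Continuous.continuousOn (continuous_id.prodMk continuous_id))
        (fun u hu => ⟨hu, hu⟩)
    have hggfst : ∀ a ∈ Ih, ∀ b ∈ Ih, ∀ u ∈ Ih, |g a u - g b u| ≤ Cg * |a - b| := by
      intro a ha b hb u hu
      have := hgg (a, u) ⟨ha, hu⟩ (b, u) ⟨hb, hu⟩
      refine this.trans (le_of_eq ?_)
      rw [Prod.dist_eq, Real.dist_eq, Real.dist_eq]
      simp [max_eq_left (abs_nonneg (a - b))]
    have hggsnd : ∀ a ∈ Ih, ∀ b ∈ Ih, ∀ u ∈ Ih, |g u a - g u b| ≤ Cg * |a - b| := by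
      intro a ha b hb u hu
      have := hgg (u, a) ⟨hu, ha⟩ (u, b) ⟨hu, hb⟩
      refine this.trans (le_of_eq ?_)
      rw [Prod.dist_eq, Real.dist_eq, Real.dist_eq]
      simp [max_eq_right (abs_nonneg (a - b))]
    have habs_h : |x0 + h - x0| = h := by rw [abs_of_nonneg (by linarith)]; ring
    have iI1 : IntervalIntegrable (fun x => ∫ u in x0..(x0+h), g x u) volume x0 (x0+h) := by
      apply ContinuousOn.intervalIntegrable
      rw [uIcc_of_le hx0h]
      have hlip : LipschitzOnWith (Real.toNNReal (Cg * h))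
          (fun x => ∫ u in x0..(x0+h), g x u) (Icc x0 (x0+h)) := by
        apply LipschitzOnWith.of_dist_le_mul
        intro a ha b hb
        rw [Real.dist_eq, Real.dist_eq, Real.coe_toNNReal _ (by positivity)]
        have hsub : (∫ u in x0..(x0+h), g a u) - (∫ u in x0..(x0+h), g b u)
            = ∫ u in x0..(x0+h), (g a u - g b u) := (integral_sub (i1 a ha) (i1 b hb)).symm
        rw [hsub]
        have hbd := intervalIntegral.norm_integral_le_of_norm_le_const
          (C := Cg * |a - b|) (f := fun u => g a u - g b u) (a := x0) (b := x0 + h)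
          (fun u hu => by
            rw [Real.norm_eq_abs]
            exact hggfst a ha b hb u (Ioc_subset_Icc_self (by rwa [uIoc_of_le hx0h] at hu)))
        rw [Real.norm_eq_abs, habs_h] at hbd
        exact hbd.trans (le_of_eq (by ring))
      exact hlip.continuousOn
    have iI2 : IntervalIntegrable (fun x => ∫ u in x0..(x0+h), g u x) volume x0 (x0+h) := by
      apply ContinuousOn.intervalIntegrable
      rw [uIcc_of_le hx0h]
      have hlip : LipschitzOnWith (Real.toNNReal (Cg * h))
          (fun x => ∫ u in x0..(x0+h), g u x) (Icc x0 (x0+h)) := by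
        apply LipschitzOnWith.of_dist_le_mul
        intro a ha b hb
        rw [Real.dist_eq, Real.dist_eq, Real.coe_toNNReal _ (by positivity)]
        have hsub : (∫ u in x0..(x0+h), g u a) - (∫ u in x0..(x0+h), g u b)
            = ∫ u in x0..(x0+h), (g u a - g u b) := (integral_sub (i2 a ha) (i2 b hb)).symm
        rw [hsub]
        have hbd := intervalIntegral.norm_integral_le_of_norm_le_const
          (C := Cg * |a - b|) (f := fun u => g u a - g u b) (a := x0) (b := x0 + h)
          (fun u hu => by
            rw [Real.norm_eq_abs]
            exact hggsnd a ha b hb u (Ioc_subset_Icc_self (by rwa [uIoc_of_le hx0h] at hu)))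
        rw [Real.norm_eq_abs, habs_h] at hbd
        exact hbd.trans (le_of_eq (by ring))
      exact hlip.continuousOn
    have fub : (∫ x in x0..(x0+h), ∫ u in x0..(x0+h), g u x)
        = ∫ x in x0..(x0+h), ∫ u in x0..(x0+h), g x u := by
      have hcomp : ContinuousOn (fun z : ℝ × ℝ => g z.2 z.1)
          (Icc x0 (x0+h) ×ˢ Icc x0 (x0+h)) :=
        gcont.comp (Continuous.continuousOn (continuous_snd.prodMk continuous_fst))
          (fun z hz => ⟨hz.2, hz.1⟩)
      have hint : IntegrableOn (fun z : ℝ × ℝ => g z.2 z.1)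
          (Icc x0 (x0+h) ×ˢ Icc x0 (x0+h)) volume :=
        hcomp.integrableOn_compact (isCompact_Icc.prod isCompact_Icc)
      have hint2 : Integrable (Function.uncurry (fun x u : ℝ => g u x))
          ((volume.restrict (Ioc x0 (x0+h))).prod (volume.restrict (Ioc x0 (x0+h)))) := by
        rw [Measure.prod_restrict, ← MeasureTheory.Measure.volume_eq_prod]
        exact hint.mono_set (Set.prod_mono Ioc_subset_Icc_self Ioc_subset_Icc_self)
      simp only [intervalIntegral.integral_of_le hx0h]
      exact MeasureTheory.integral_integral_swap hint2
    have inner_eq : ∀ x ∈ Ih,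
        (∫ u in x0..(x0+h), (g x u + g u x - g x x - g u u))
          = (∫ u in x0..(x0+h), g x u) + (∫ u in x0..(x0+h), g u x) - h * g x x
            - ∫ u in x0..(x0+h), g u u := by
      intro x hx
      rw [integral_sub (((i1 x hx).add (i2 x hx)).sub
            (intervalIntegrable_const : IntervalIntegrable (fun _ => g x x) volume x0 (x0+h))) i3,
        integral_sub ((i1 x hx).add (i2 x hx)) intervalIntegrable_const,
        integral_add (i1 x hx) (i2 x hx), intervalIntegral.integral_const, smul_eq_mul]
      ring
    have outer_eq : (∫ x in x0..(x0+h), ∫ u in x0..(x0+h), (g x u + g u x - g x x - g u u))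
        = (∫ x in x0..(x0+h), ∫ u in x0..(x0+h), g x u)
          + (∫ x in x0..(x0+h), ∫ u in x0..(x0+h), g x u)
          - h * (∫ x in x0..(x0+h), g x x) - h * (∫ x in x0..(x0+h), g x x) := by
      rw [intervalIntegral.integral_congr
        (g := fun x => (∫ u in x0..(x0+h), g x u) + (∫ u in x0..(x0+h), g u x) - h * g x x
          - ∫ u in x0..(x0+h), g u u)
        (fun x hx => inner_eq x (by rwa [uIcc_of_le hx0h] at hx))]
      rw [integral_sub ((iI1.add iI2).sub (i3.const_mul h)) intervalIntegrable_const,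
        integral_sub (iI1.add iI2) (i3.const_mul h),
        integral_add iI1 iI2, intervalIntegral.integral_const_mul,
        intervalIntegral.integral_const, smul_eq_mul, fub]
      ring
    have Φbound : |∫ x in x0..(x0+h), ∫ u in x0..(x0+h), (g x u + g u x - g x x - g u u)|
        ≤ Cφ * h ^ 3 * h * h := by
      have hbout := intervalIntegral.norm_integral_le_of_norm_le_const
        (C := Cφ * h ^ 3 * h)
        (f := fun x => ∫ u in x0..(x0+h), (g x u + g u x - g x x - g u u))
        (a := x0) (b := x0 + h)
        (fun x hx => by
          have hxI : x ∈ Ih := Ioc_subset_Icc_self (by rwa [uIoc_of_le hx0h] at hx)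
          have hbin := intervalIntegral.norm_integral_le_of_norm_le_const
            (C := Cφ * h ^ 3) (f := fun u => g x u + g u x - g x x - g u u)
            (a := x0) (b := x0 + h)
            (fun u hu => by
              have huI : u ∈ Ih := Ioc_subset_Icc_self (by rwa [uIoc_of_le hx0h] at hu)
              rw [Real.norm_eq_abs]
              exact hφ x hxI u huI)
          rw [Real.norm_eq_abs, habs_h] at hbin
          rw [Real.norm_eq_abs]
          exact hbin)
      rw [Real.norm_eq_abs, habs_h] at hbout
      exact hbout
    have e1 : (∫ x in x0..(x0 + h),
          ∫ u in x0..(x0 + h), ∫ y in (p u y0)..(p u (y0 + h)), f x y)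
        = ∫ x in x0..(x0+h), ∫ u in x0..(x0+h), g x u := by simp only [hgdef]
    have e2 : (∫ x in x0..(x0 + h), ∫ y in (p x y0)..(p x (y0 + h)), f x y)
        = ∫ x in x0..(x0+h), g x x := by simp only [hgdef]
    rw [e1, e2]
    have heq : 1 / h * (∫ x in x0..(x0+h), ∫ u in x0..(x0+h), g x u)
          - (∫ x in x0..(x0+h), g x x)
        = (∫ x in x0..(x0+h), ∫ u in x0..(x0+h), (g x u + g u x - g x x - g u u)) / (2 * h) := by
      rw [outer_eq]
      field_simp
      ring
    rw [heq, abs_div, abs_of_pos (by positivity : (0:ℝ) < 2 * h),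
      div_le_iff₀ (by positivity : (0:ℝ) < 2 * h)]
    refine Φbound.trans ?_
    nlinarith [mul_nonneg hCφ0 (le_of_lt (pow_pos hh0 5)), hh0]
  rw [Asymptotics.isBigO_iff]
  refine ⟨Cφ, ?_⟩
  filter_upwards [Ioc_mem_nhdsGT hh₀] with h hh
  have hh1 : 0 < h := hh.1
  have := key h hh
  rw [Real.norm_eq_abs, Real.norm_eq_abs, abs_abs, abs_of_pos (by positivity : (0:ℝ) < h ^ 4)]
  exact this
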